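/- Fix ℓ ≥ 1 and complex numbers k₁, …, k_ℓ with k₁ + ⋯ + k_ℓ = 0. Then for every n ≥ ℓ, the polynomial P_n = ∑_{i₁+⋯+i_ℓ = n, iⱼ ≥ 1} k₁^{i₁}⋯k_ℓ^{i_ℓ} x_{i₁}⋯x_{i_ℓ} satisfies d(P_n) = 0, i.e. P_n is an Atiyah–Segal invariant polynomial. -/

import Mathlib

open MvPolynomial

noncomputable def x (i : ℕ) : MvPolynomial ℕ ℂ := X (i - 1)

/-- `P ℓ k n = ∑ k₁^{i₁}⋯k_ℓ^{i_ℓ} x_{i₁}⋯x_{i_ℓ}`, summed over tuples of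
positive integers `(i₁,…,i_ℓ)` with `i₁+⋯+i_ℓ = n` (so `P ℓ k n = 0` if `n < ℓ`). -/
noncomputable def P (ℓ : ℕ) (k : Fin ℓ → ℂ) (n : ℕ) : MvPolynomial ℕ ℂ :=
  ∑ i ∈ Finset.filter (fun i : Fin ℓ → ℕ => (∀ j, 1 ≤ i j) ∧ ∑ j, i j = n)
      (Fintype.piFinset fun _ => Finset.range (n + 1)),
    C (∏ j, k j ^ i j) * ∏ j, x (i j)

lemma d_prod {ι : Type*} [DecidableEq ι]
    (d : Derivation ℂ (MvPolynomial ℕ ℂ) (MvPolynomial ℕ ℂ))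
    (s : Finset ι) (f : ι → MvPolynomial ℕ ℂ) :
    d (∏ j ∈ s, f j) = ∑ j ∈ s, (∏ m ∈ s.erase j, f m) * d (f j) := by
  induction s using Finset.induction_on with
  | empty => simp
  | insert a s ha ih =>
    rw [Finset.prod_insert ha, Derivation.leibniz, smul_eq_mul, smul_eq_mul, ih,
      Finset.sum_insert ha, Finset.erase_insert ha, Finset.mul_sum]
    rw [add_comm]
    congr 1
    apply Finset.sum_congr rfl
    intro b hb
    rw [Finset.erase_insert_of_ne (by rintro rfl; exact ha hb)]
    rw [Finset.prod_insert (fun hc => ha (Finset.erase_subset _ _ hc)), mul_assoc]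

/-- If `k₁+⋯+k_ℓ = 0` then `P_n` is an Atiyah–Segal invariant polynomial: `d(P_n) = 0`. -/
theorem d_P_eq_zero (d : Derivation ℂ (MvPolynomial ℕ ℂ) (MvPolynomial ℕ ℂ))
    (h1 : d (x 1) = 0) (h : ∀ i, 2 ≤ i → d (x i) = x (i - 1))
    (ℓ : ℕ) (hℓ : 1 ≤ ℓ) (k : Fin ℓ → ℂ) (hk : ∑ j, k j = 0) (n : ℕ) (hn : ℓ ≤ n) :
    d (P ℓ k n) = 0 := by
  classical
  have hn1 : 1 ≤ n := le_trans hℓ hn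
  set S : ℕ → Finset (Fin ℓ → ℕ) := fun n' =>
    Finset.filter (fun i : Fin ℓ → ℕ => (∀ j, 1 ≤ i j) ∧ ∑ j, i j = n')
      (Fintype.piFinset fun _ => Finset.range (n + 1)) with hS
  rw [P, map_sum]
  have key : ∀ i ∈ S n, d (C (∏ j, k j ^ i j) * ∏ j, x (i j)) =
      ∑ j, (if 2 ≤ i j then
        C (k j * ∏ m, k m ^ (Function.update i j (i j - 1)) m)
          * ∏ m, x ((Function.update i j (i j - 1)) m) else 0) := by
    intro i hi
    rw [hS, Finset.mem_filter] at hi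
    obtain ⟨hmem, hpos, hsum⟩ := hi
    rw [← smul_eq_C_mul, Derivation.map_smul, d_prod, Finset.smul_sum]
    apply Finset.sum_congr rfl
    intro j _
    by_cases h2 : 2 ≤ i j
    · rw [if_pos h2, h _ h2]
      have hij : i j - 1 + 1 = i j := by omega
      have hc : ∏ m, k m ^ i m = k j * ∏ m, k m ^ (Function.update i j (i j - 1)) m := by
        rw [← Finset.mul_prod_erase _ _ (Finset.mem_univ j),
          ← Finset.mul_prod_erase _ (fun m => k m ^ (Function.update i j (i j - 1)) m)
            (Finset.mem_univ j), Function.update_self, ← mul_assoc, ← pow_succ', hij]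
        congr 1
        apply Finset.prod_congr rfl
        intro m hm
        rw [Function.update_of_ne (Finset.ne_of_mem_erase hm)]
      have hp : ∏ m, x ((Function.update i j (i j - 1)) m)
          = (∏ m ∈ Finset.univ.erase j, x (i m)) * x (i j - 1) := by
        rw [← Finset.mul_prod_erase _ _ (Finset.mem_univ j), Function.update_self, mul_comm]
        congr 1
        apply Finset.prod_congr rfl
        intro m hm
        rw [Function.update_of_ne (Finset.ne_of_mem_erase hm)]
      rw [hc, hp, smul_eq_C_mul]
    · rw [if_neg h2]
      have : i j = 1 := by have := hpos j; omega
      rw [this, h1, mul_zero, smul_zero]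
  rw [Finset.sum_congr rfl key]
  -- now double sum with ifs
  simp only [← Finset.sum_filter]
  rw [Finset.sum_sigma']
  trans (∑ q ∈ (S (n - 1)).sigma (fun _ => (Finset.univ : Finset (Fin ℓ))),
      C (k q.2 * ∏ m, k m ^ q.1 m) * ∏ m, x (q.1 m))
  · apply Finset.sum_nbij' (i := fun p => ⟨Function.update p.1 p.2 (p.1 p.2 - 1), p.2⟩)
      (j := fun q => ⟨Function.update q.1 q.2 (q.1 q.2 + 1), q.2⟩)
    · rintro ⟨i, j⟩ hp
      simp only [hS, Finset.mem_sigma, Finset.mem_filter, Fintype.mem_piFinset,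
        Finset.mem_univ, true_and, and_true, Finset.mem_range] at hp ⊢
      obtain ⟨⟨hmem, hpos, hsum⟩, h2⟩ := hp
      have e1 := Finset.add_sum_erase Finset.univ i (Finset.mem_univ j)
      refine And.intro ?_ (And.intro ?_ ?_)
      · intro m
        rcases eq_or_ne m j with rfl | hmj
        · rw [Function.update_self]; have := hmem m; omega
        · rw [Function.update_of_ne hmj]; exact hmem m
      · intro m
        rcases eq_or_ne m j with rfl | hmj
        · rw [Function.update_self]; omega
        · rw [Function.update_of_ne hmj]; exact hpos m
      · rw [Finset.sum_update_of_mem (Finset.mem_univ j), ← Finset.erase_eq]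
        omega
    · rintro ⟨i, j⟩ hq
      simp only [hS, Finset.mem_sigma, Finset.mem_filter, Fintype.mem_piFinset,
        Finset.mem_univ, true_and, and_true, Finset.mem_range] at hq ⊢
      obtain ⟨hmem, hpos, hsum⟩ := hq
      have hle : i j ≤ n - 1 := hsum ▸ Finset.single_le_sum
        (fun m _ => Nat.zero_le (i m)) (Finset.mem_univ j)
      have e1 := Finset.add_sum_erase Finset.univ i (Finset.mem_univ j)
      refine And.intro (And.intro ?_ (And.intro ?_ ?_)) ?_
      · intro m
        rcases eq_or_ne m j with rfl | hmj
        · rw [Function.update_self]; omega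
        · rw [Function.update_of_ne hmj]; exact hmem m
      · intro m
        rcases eq_or_ne m j with rfl | hmj
        · rw [Function.update_self]; omega
        · rw [Function.update_of_ne hmj]; exact hpos m
      · rw [Finset.sum_update_of_mem (Finset.mem_univ j), ← Finset.erase_eq]
        omega
      · rw [Function.update_self]; have := hpos j; omega
    · rintro ⟨i, j⟩ hp
      simp only [hS, Finset.mem_sigma, Finset.mem_filter, Fintype.mem_piFinset,
        Finset.mem_univ, true_and, Finset.mem_range] at hp
      obtain ⟨⟨hmem, hpos, hsum⟩, h2⟩ := hp
      simp only [Function.update_idem, Function.update_self]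
      rw [show i j - 1 + 1 = i j by omega, Function.update_eq_self]
    · rintro ⟨i, j⟩ hq
      simp only [Function.update_idem, Function.update_self]
      rw [show i j + 1 - 1 = i j by omega, Function.update_eq_self]
    · intro p hp
      rfl
  · rw [Finset.sum_sigma]
    apply Finset.sum_eq_zero
    intro i' _
    simp only [map_mul]
    rw [← Finset.sum_mul, ← Finset.sum_mul, ← map_sum, hk, map_zero, zero_mul, zero_mul]
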